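/- Upper tail bound for the largest eigenvalue, case 0 < α ≤ 1: fix an integer d ≥ 3, α ∈ (0,1], and fix τ > 2/(α+2). Then P( λ₁(X) ≥ (log n)^{1/α} + (log n)^{τ/α} ) tends to 0 as n → ∞ (along integers n > d with nd even). -/

import Mathlib

open MeasureTheory ProbabilityTheory Filter Real
open scoped ENNReal NNReal

noncomputable section

instance matrixMeasurableSpace {m n α : Type*} [MeasurableSpace α] :
    MeasurableSpace (Matrix m n α) :=
  inferInstanceAs (MeasurableSpace (m → n → α))

/-- The largest eigenvalue of a real square matrix: the supremum of its real eigenvalues. -/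
def lam1 {n : ℕ} (M : Matrix (Fin n) (Fin n) ℝ) : ℝ :=
  sSup {r : ℝ | ∃ v : Fin n → ℝ, v ≠ 0 ∧ M.mulVec v = r • v}

/-- The set of adjacency matrices of simple `d`-regular graphs on `n` vertices:
symmetric 0-1 matrices with zero diagonal and all row sums equal to `d`. -/
def RegAdj (n d : ℕ) : Set (Matrix (Fin n) (Fin n) ℝ) :=
  {M | M.IsSymm ∧ (∀ i, M i i = 0) ∧ (∀ i j, M i j = 0 ∨ M i j = 1) ∧
    ∀ i, (∑ j, M i j) = (d : ℝ)}

/-- A Weibull distribution with shape parameter `α` and constants `C₁ C₂`. -/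
def IsWeibull (α C₁ C₂ : ℝ) (μ : Measure ℝ) : Prop :=
  IsProbabilityMeasure μ ∧
  ∀ t : ℝ, 1 ≤ t →
    ENNReal.ofReal (C₁ * Real.exp (-t ^ α) / 2) ≤ μ {x | t ≤ x} ∧
    μ {x | t ≤ x} ≤ ENNReal.ofReal (C₂ * Real.exp (-t ^ α) / 2) ∧
    ENNReal.ofReal (C₁ * Real.exp (-t ^ α) / 2) ≤ μ {x | x ≤ -t} ∧
    μ {x | x ≤ -t} ≤ ENNReal.ofReal (C₂ * Real.exp (-t ^ α) / 2)

/-- The weighted random `d`-regular graph model: `A` is uniformly distributed on the set of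
adjacency matrices of simple `d`-regular graphs on `n` vertices, `W` is a symmetric random
matrix with zero diagonal whose upper-triangular entries are i.i.d. with common law `μ`
(a Weibull law with shape parameter `α` and constants `C₁ C₂`), and `W` is independent
of `A`. -/
def WRRGModel (d : ℕ) (α C₁ C₂ : ℝ) {n : ℕ} {Ω : Type*} [MeasurableSpace Ω]
    (P : Measure Ω) (A W : Ω → Matrix (Fin n) (Fin n) ℝ) (μ : Measure ℝ) : Prop :=
  IsProbabilityMeasure P ∧ Measurable A ∧ Measurable W ∧
  (∀ ω, A ω ∈ RegAdj n d) ∧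
  (∀ M ∈ RegAdj n d, P {ω | A ω = M} = ((RegAdj n d).ncard : ℝ≥0∞)⁻¹) ∧
  (∀ ω, (W ω).IsSymm) ∧ (∀ ω i, W ω i i = 0) ∧
  IsWeibull α C₁ C₂ μ ∧
  (∀ i j : Fin n, i < j → Measure.map (fun ω => W ω i j) P = μ) ∧
  iIndepFun
    (fun (p : {p : Fin n × Fin n // p.1 < p.2}) (ω : Ω) => W ω p.1.1 p.1.2) P ∧
  IndepFun A W P

lemma rpow_subadd {α a b : ℝ} (hα : 0 ≤ α) (hα1 : α ≤ 1) (ha : 0 ≤ a) (hb : 0 ≤ b) :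
    (a + b) ^ α ≤ a ^ α + b ^ α := by
  have h := NNReal.rpow_add_le_add_rpow a.toNNReal b.toNNReal hα hα1
  calc (a + b) ^ α = (((a.toNNReal + b.toNNReal : ℝ≥0) : ℝ)) ^ α := by
        rw [NNReal.coe_add, Real.coe_toNNReal _ ha, Real.coe_toNNReal _ hb]
    _ = (((a.toNNReal + b.toNNReal) ^ α : ℝ≥0) : ℝ) := by rw [NNReal.coe_rpow]
    _ ≤ ((a.toNNReal ^ α + b.toNNReal ^ α : ℝ≥0) : ℝ) := by exact_mod_cast h
    _ = a ^ α + b ^ α := by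
        rw [NNReal.coe_add, NNReal.coe_rpow, NNReal.coe_rpow,
          Real.coe_toNNReal _ ha, Real.coe_toNNReal _ hb]

/-- Bernoulli-type lower bound via concavity: for `0 < α ≤ 1`, `0 ≤ s ≤ 1`,
`(1+s)^α ≥ 1 + (2^α - 1) * s`. -/
lemma one_add_rpow_ge {α s : ℝ} (hα : 0 < α) (hα1 : α ≤ 1) (hs : 0 ≤ s) (hs1 : s ≤ 1) :
    1 + (2 ^ α - 1) * s ≤ (1 + s) ^ α := by
  rcases eq_or_lt_of_le hα1 with h1 | h1
  · subst h1
    rw [Real.rpow_one, Real.rpow_one]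
    ring_nf
    norm_num
  · have hcc := (Real.strictConcaveOn_rpow hα h1).concaveOn
    have h2 : (0:ℝ) ≤ 2 := by norm_num
    have key := hcc.2 (Set.mem_Ici.2 (zero_le_one)) (Set.mem_Ici.2 h2)
      (show (0:ℝ) ≤ 1 - s by linarith) hs (show (1-s) + s = 1 by ring)
    simp only [smul_eq_mul] at key
    have e1 : (1 - s) * 1 + s * 2 = 1 + s := by ring
    rw [e1] at key
    have e2 : (1:ℝ) ^ α = 1 := Real.one_rpow α
    rw [e2] at key
    calc 1 + (2 ^ α - 1) * s = (1 - s) * 1 + s * (2:ℝ) ^ α := by ring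
      _ ≤ (1 + s) ^ α := key


lemma exists_row_of_le_lam1 {n : ℕ} (hn : 0 < n) (M : Matrix (Fin n) (Fin n) ℝ) {T : ℝ}
    (hT : 0 < T) (h : T ≤ lam1 M) : ∃ u, T ≤ ∑ j, |M u j| := by
  by_contra hcon
  push_neg at hcon
  haveI : Nonempty (Fin n) := ⟨⟨0, hn⟩⟩
  set R : ℝ := Finset.univ.sup' Finset.univ_nonempty (fun u => ∑ j, |M u j|) with hR
  have hRT : R < T := by
    rw [hR, Finset.sup'_lt_iff]
    intro u _
    exact hcon u
  have key : ∀ r ∈ {r : ℝ | ∃ v : Fin n → ℝ, v ≠ 0 ∧ M.mulVec v = r • v}, r ≤ max R 0 := by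
    rintro r ⟨v, hv, hMv⟩
    obtain ⟨i, -, hmax⟩ := Finset.exists_max_image Finset.univ (fun i => |v i|)
      ⟨⟨0, hn⟩, Finset.mem_univ _⟩
    have hvi : 0 < |v i| := by
      obtain ⟨j, hj⟩ := Function.ne_iff.mp hv
      exact lt_of_lt_of_le (abs_pos.2 hj) (hmax j (Finset.mem_univ j))
    have heq : r * v i = ∑ j, M i j * v j := by
      have := congrFun hMv i
      simpa [Matrix.mulVec, dotProduct, Pi.smul_apply, smul_eq_mul] using this.symm
    have habs : |r| * |v i| ≤ (∑ j, |M i j|) * |v i| := by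
      calc |r| * |v i| = |r * v i| := (abs_mul r (v i)).symm
        _ = |∑ j, M i j * v j| := by rw [heq]
        _ ≤ ∑ j, |M i j * v j| := Finset.abs_sum_le_sum_abs _ _
        _ = ∑ j, |M i j| * |v j| := by simp [abs_mul]
        _ ≤ ∑ j, |M i j| * |v i| := Finset.sum_le_sum fun j _ =>
            mul_le_mul_of_nonneg_left (hmax j (Finset.mem_univ j)) (abs_nonneg _)
        _ = (∑ j, |M i j|) * |v i| := (Finset.sum_mul _ _ _).symm
    have hr : |r| ≤ ∑ j, |M i j| := le_of_mul_le_mul_right habs hvi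
    calc r ≤ |r| := le_abs_self r
      _ ≤ ∑ j, |M i j| := hr
      _ ≤ R := Finset.le_sup' (fun u => ∑ j, |M u j|) (Finset.mem_univ i)
      _ ≤ max R 0 := le_max_left _ _
  have hsup : lam1 M ≤ max R 0 := Real.sSup_le key (le_max_right _ _)
  have : T ≤ max R 0 := le_trans h hsup
  rcases max_cases R 0 with ⟨he, -⟩ | ⟨he, -⟩ <;> rw [he] at this <;> linarith


/-- Key exponent inequality for the induction. -/
lemma exp_key {α T c m : ℝ} (hα : 0 < α) (hα1 : α ≤ 1) (hm : 0 ≤ m) :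
    (max (T - c) 0) ^ α ≤ m ^ α + (max (T - m - c) 0) ^ α := by
  rcases le_or_gt 0 (T - m - c) with hpos | hneg
  · rw [max_eq_left hpos, max_eq_left (by linarith)]
    have := rpow_subadd hα.le hα1 hm hpos
    have e : m + (T - m - c) = T - c := by ring
    rw [e] at this
    linarith
  · rw [max_eq_right hneg.le, Real.zero_rpow hα.ne', add_zero]
    rcases le_or_gt (T - c) 0 with h0 | h0
    · rw [max_eq_right h0, Real.zero_rpow hα.ne']
      exact Real.rpow_nonneg hm α
    · rw [max_eq_left h0.le]
      exact Real.rpow_le_rpow h0.le (by linarith) hα.le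

set_option maxHeartbeats 1000000 in
/-- Tail bound for a sum of independent nonnegative random variables with
Weibull-type tails, `0 < α ≤ 1`. -/
lemma sum_tail {Ω' : Type*} [MeasurableSpace Ω'] (P : Measure Ω') [IsProbabilityMeasure P]
    {ι : Type*} (α C : ℝ) (hα : 0 < α) (hα1 : α ≤ 1) (hC : Real.exp 1 ≤ C)
    (Y : ι → Ω' → ℝ) (hmeas : ∀ i, Measurable (Y i)) (hnn : ∀ i ω, 0 ≤ Y i ω)
    (hindep : iIndepFun Y P)
    (htail : ∀ i (t : ℝ), P {ω | t ≤ Y i ω} ≤ ENNReal.ofReal (C * Real.exp (-(max t 0) ^ α)))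
    (s : Finset ι) : ∀ T : ℝ,
    P {ω | T ≤ ∑ i ∈ s, Y i ω} ≤
      ENNReal.ofReal (C ^ s.card * (max T 0 + 2) ^ s.card *
        Real.exp (-(max (T - s.card) 0) ^ α)) := by
  classical
  have hC1 : (1:ℝ) ≤ C := le_trans (by nlinarith [Real.add_one_le_exp (1:ℝ)]) hC
  have hC0 : (0:ℝ) ≤ C := by linarith
  induction s using Finset.induction_on with
  | empty =>
    intro T
    simp only [Finset.sum_empty, Finset.card_empty, pow_zero, one_mul, Nat.cast_zero, sub_zero]
    rcases le_or_gt T 0 with hT | hT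
    · have : {ω : Ω' | T ≤ 0} = Set.univ := by
        ext ω; simp [hT]
      rw [this, measure_univ, max_eq_right hT, Real.zero_rpow hα.ne', neg_zero, Real.exp_zero,
        ENNReal.ofReal_one]
    · have : {ω : Ω' | T ≤ 0} = ∅ := by
        ext ω; simp [not_le, hT]
      rw [this, measure_empty]
      exact bot_le
  | @insert i s hi IH =>
    intro T
    set k := s.card with hk
    set Tp := max T 0 with hTp
    have hTp0 : 0 ≤ Tp := le_max_right _ _
    set M : ℕ := ⌊Tp⌋₊ + 1 with hM
    have hMT : Tp < M := by
      rw [hM]; push_cast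
      exact Nat.lt_floor_add_one Tp
    have hM1 : (M : ℝ) + 1 ≤ Tp + 2 := by
      rw [hM]; push_cast
      have := Nat.floor_le hTp0
      linarith
    have hsub : {ω | T ≤ ∑ j ∈ insert i s, Y j ω} ⊆
        (⋃ m ∈ Finset.range M, ({ω | (m:ℝ) ≤ Y i ω} ∩ {ω | T - ((m:ℝ)+1) ≤ ∑ j ∈ s, Y j ω}))
          ∪ {ω | (M:ℝ) ≤ Y i ω} := by
      intro ω hω
      simp only [Set.mem_setOf_eq, Finset.sum_insert hi] at hω
      rcases le_or_gt M ⌊Y i ω⌋₊ with hMm | hmM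
      · right
        have h1 : (M:ℝ) ≤ (⌊Y i ω⌋₊ : ℝ) := by exact_mod_cast hMm
        exact le_trans h1 (Nat.floor_le (hnn i ω))
      · left
        refine Set.mem_biUnion (Finset.mem_range.2 hmM) ⟨Nat.floor_le (hnn i ω), ?_⟩
        have h1 : Y i ω < (⌊Y i ω⌋₊ : ℝ) + 1 := Nat.lt_floor_add_one _
        have h2 : ∀ j ∈ s, (0:ℝ) ≤ Y j ω := fun j _ => hnn j ω
        simp only [Set.mem_setOf_eq]
        linarith
    have hcard : (insert i s).card = k + 1 := Finset.card_insert_of_notMem hi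
    set E : ℝ := C ^ (k+1) * (Tp + 2) ^ k * Real.exp (-(max (T - ((k:ℝ)+1)) 0) ^ α) with hE
    have hE0 : 0 ≤ E := by positivity
    have hIF : IndepFun (∑ j ∈ s, Y j) (Y i) P :=
      hindep.indepFun_finsetSum_of_notMem hmeas hi
    have hterm : ∀ m : ℕ,
        P ({ω | (m:ℝ) ≤ Y i ω} ∩ {ω | T - ((m:ℝ)+1) ≤ ∑ j ∈ s, Y j ω}) ≤ ENNReal.ofReal E := by
      intro m
      have hs1 : (∑ j ∈ s, Y j) ⁻¹' Set.Ici (T - ((m:ℝ)+1)) =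
          {ω | T - ((m:ℝ)+1) ≤ ∑ i ∈ s, Y i ω} := by
        ext ω; simp [Finset.sum_apply]
      have hs2 : (Y i) ⁻¹' Set.Ici ((m:ℝ)) = {ω | (m:ℝ) ≤ Y i ω} := by
        ext ω; simp
      have hswap : {ω | (m:ℝ) ≤ Y i ω} ∩ {ω | T - ((m:ℝ)+1) ≤ ∑ j ∈ s, Y j ω}
          = ((∑ j ∈ s, Y j) ⁻¹' Set.Ici (T - ((m:ℝ)+1))) ∩ ((Y i) ⁻¹' Set.Ici ((m:ℝ))) := by
        rw [hs1, hs2]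
        exact Set.inter_comm _ _
      rw [hswap, hIF.measure_inter_preimage_eq_mul _ _ measurableSet_Ici measurableSet_Ici]
      have h1 : P ((∑ j ∈ s, Y j) ⁻¹' Set.Ici (T - ((m:ℝ)+1))) ≤
          ENNReal.ofReal (C ^ k * (max (T - ((m:ℝ)+1)) 0 + 2) ^ k *
            Real.exp (-(max (T - ((m:ℝ)+1) - (k:ℝ)) 0) ^ α)) := by
        rw [hs1]
        exact IH (T - ((m:ℝ)+1))
      have h2 : P ((Y i) ⁻¹' Set.Ici ((m:ℝ))) ≤ ENNReal.ofReal (C * Real.exp (-((m:ℝ)) ^ α)) := by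
        rw [hs2]
        have := htail i (m:ℝ)
        rwa [max_eq_left (Nat.cast_nonneg m)] at this
      calc P ((∑ j ∈ s, Y j) ⁻¹' Set.Ici (T - ((m:ℝ)+1))) * P ((Y i) ⁻¹' Set.Ici ((m:ℝ)))
          ≤ ENNReal.ofReal (C ^ k * (max (T - ((m:ℝ)+1)) 0 + 2) ^ k *
              Real.exp (-(max (T - ((m:ℝ)+1) - (k:ℝ)) 0) ^ α)) *
            ENNReal.ofReal (C * Real.exp (-((m:ℝ)) ^ α)) := mul_le_mul' h1 h2
        _ = ENNReal.ofReal ((C ^ k * (max (T - ((m:ℝ)+1)) 0 + 2) ^ k *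
              Real.exp (-(max (T - ((m:ℝ)+1) - (k:ℝ)) 0) ^ α)) *
              (C * Real.exp (-((m:ℝ)) ^ α))) := by
            rw [← ENNReal.ofReal_mul (by positivity)]
        _ ≤ ENNReal.ofReal E := by
            apply ENNReal.ofReal_le_ofReal
            rw [hE]
            have hb : (max (T - ((m:ℝ)+1)) 0 + 2) ^ k ≤ (Tp + 2) ^ k := by
              apply pow_le_pow_left₀ (by positivity)
              have h3 : max (T - ((m:ℝ)+1)) 0 ≤ Tp := by
                apply max_le _ hTp0
                have h4 : T ≤ Tp := le_max_left _ _
                have hm0 : (0:ℝ) ≤ (m:ℝ) := Nat.cast_nonneg m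
                linarith
              linarith
            have hexp : Real.exp (-(max (T - ((m:ℝ)+1) - (k:ℝ)) 0) ^ α) *
                Real.exp (-((m:ℝ)) ^ α) ≤ Real.exp (-(max (T - ((k:ℝ)+1)) 0) ^ α) := by
              rw [← Real.exp_add]
              apply Real.exp_le_exp.2
              have hkey := exp_key (α := α) (T := T) (c := (k:ℝ)+1) (m := (m:ℝ)) hα hα1
                (Nat.cast_nonneg m)
              have e1 : T - ((m:ℝ)+1) - (k:ℝ) = T - (m:ℝ) - ((k:ℝ)+1) := by ring
              rw [e1]
              linarith
            calc C ^ k * (max (T - ((m:ℝ)+1)) 0 + 2) ^ k *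
                  Real.exp (-(max (T - ((m:ℝ)+1) - (k:ℝ)) 0) ^ α) *
                  (C * Real.exp (-((m:ℝ)) ^ α))
                = (C ^ k * C) * ((max (T - ((m:ℝ)+1)) 0 + 2) ^ k) *
                  (Real.exp (-(max (T - ((m:ℝ)+1) - (k:ℝ)) 0) ^ α) *
                    Real.exp (-((m:ℝ)) ^ α)) := by ring
              _ ≤ (C ^ k * C) * ((Tp + 2) ^ k) * Real.exp (-(max (T - ((k:ℝ)+1)) 0) ^ α) := by
                  apply mul_le_mul
                  · exact mul_le_mul_of_nonneg_left hb (by positivity)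
                  · exact hexp
                  · positivity
                  · positivity
              _ = C ^ (k+1) * (Tp + 2) ^ k * Real.exp (-(max (T - ((k:ℝ)+1)) 0) ^ α) := by
                  rw [pow_succ]
    have hlast : P {ω | (M:ℝ) ≤ Y i ω} ≤ ENNReal.ofReal E := by
      refine le_trans (htail i (M:ℝ)) (ENNReal.ofReal_le_ofReal ?_)
      rw [hE, max_eq_left (Nat.cast_nonneg M)]
      have h1 : C ≤ C ^ (k+1) := le_self_pow₀ hC1 (Nat.succ_ne_zero k)
      have h2 : (1:ℝ) ≤ (Tp + 2) ^ k := one_le_pow₀ (by linarith)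
      have h3 : Real.exp (-((M:ℝ)) ^ α) ≤ Real.exp (-(max (T - ((k:ℝ)+1)) 0) ^ α) := by
        apply Real.exp_le_exp.2
        have hb : max (T - ((k:ℝ)+1)) 0 ≤ (M:ℝ) := by
          apply max_le _ (Nat.cast_nonneg M)
          have h4 : T ≤ Tp := le_max_left _ _
          have hk0 : (0:ℝ) ≤ (k:ℝ) := Nat.cast_nonneg k
          linarith
        have := Real.rpow_le_rpow (le_max_right _ _) hb hα.le
        linarith
      calc C * Real.exp (-((M:ℝ)) ^ α)
          ≤ C ^ (k+1) * ((Tp + 2) ^ k * Real.exp (-(max (T - ((k:ℝ)+1)) 0) ^ α)) := by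
            apply mul_le_mul h1 _ (by positivity) (by positivity)
            calc Real.exp (-((M:ℝ)) ^ α) = 1 * Real.exp (-((M:ℝ)) ^ α) := (one_mul _).symm
              _ ≤ (Tp + 2) ^ k * Real.exp (-(max (T - ((k:ℝ)+1)) 0) ^ α) :=
                  mul_le_mul h2 h3 (Real.exp_pos _).le (by linarith)
        _ = C ^ (k+1) * (Tp + 2) ^ k * Real.exp (-(max (T - ((k:ℝ)+1)) 0) ^ α) := by ring
    have hofE : ((M:ℝ≥0∞) + 1) * ENNReal.ofReal E = ENNReal.ofReal (((M:ℝ) + 1) * E) := by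
      have hcast : ((M:ℝ≥0∞) + 1) = ENNReal.ofReal ((M:ℝ) + 1) := by
        rw [ENNReal.ofReal_add (Nat.cast_nonneg M) zero_le_one, ENNReal.ofReal_natCast,
          ENNReal.ofReal_one]
      rw [hcast, ← ENNReal.ofReal_mul (by positivity)]
    calc P {ω | T ≤ ∑ j ∈ insert i s, Y j ω}
        ≤ P ((⋃ m ∈ Finset.range M,
            ({ω | (m:ℝ) ≤ Y i ω} ∩ {ω | T - ((m:ℝ)+1) ≤ ∑ j ∈ s, Y j ω}))
            ∪ {ω | (M:ℝ) ≤ Y i ω}) := measure_mono hsub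
      _ ≤ P (⋃ m ∈ Finset.range M,
            ({ω | (m:ℝ) ≤ Y i ω} ∩ {ω | T - ((m:ℝ)+1) ≤ ∑ j ∈ s, Y j ω}))
            + P {ω | (M:ℝ) ≤ Y i ω} := measure_union_le _ _
      _ ≤ (∑ m ∈ Finset.range M,
            P ({ω | (m:ℝ) ≤ Y i ω} ∩ {ω | T - ((m:ℝ)+1) ≤ ∑ j ∈ s, Y j ω}))
            + P {ω | (M:ℝ) ≤ Y i ω} :=
            add_le_add (measure_biUnion_finset_le _ _) le_rfl
      _ ≤ (∑ _m ∈ Finset.range M, ENNReal.ofReal E) + ENNReal.ofReal E :=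
            add_le_add (Finset.sum_le_sum fun m _ => hterm m) hlast
      _ = ((M : ℝ≥0∞) + 1) * ENNReal.ofReal E := by
            rw [Finset.sum_const, Finset.card_range, nsmul_eq_mul]
            ring
      _ = ENNReal.ofReal (((M:ℝ) + 1) * E) := hofE
      _ ≤ ENNReal.ofReal ((Tp + 2) * E) :=
            ENNReal.ofReal_le_ofReal (mul_le_mul_of_nonneg_right hM1 hE0)
      _ = ENNReal.ofReal (C ^ (insert i s).card * (max T 0 + 2) ^ (insert i s).card *
            Real.exp (-(max (T - ((insert i s).card : ℝ)) 0) ^ α)) := by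
            rw [hcard, hE]
            congr 1
            push_cast
            ring

lemma measurable_entry {n : ℕ} (i j : Fin n) :
    Measurable fun M : Matrix (Fin n) (Fin n) ℝ => M i j := by
  have h : (fun M : Matrix (Fin n) (Fin n) ℝ => M i j) =
      ((fun g : Fin n → ℝ => g j) ∘ fun f : Fin n → Fin n → ℝ => f i) := rfl
  rw [h]
  exact (measurable_pi_apply j).comp (measurable_pi_apply i)

lemma measurableSet_RegAdj (n d : ℕ) : MeasurableSet (RegAdj n d) := by
  have h1 : RegAdj n d = (⋂ i, ⋂ j, {M : Matrix (Fin n) (Fin n) ℝ | M j i = M i j}) ∩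
      ((⋂ i, {M : Matrix (Fin n) (Fin n) ℝ | M i i = 0}) ∩
      ((⋂ i, ⋂ j, ({M : Matrix (Fin n) (Fin n) ℝ | M i j = 0} ∪
          {M : Matrix (Fin n) (Fin n) ℝ | M i j = 1})) ∩
       (⋂ i, {M : Matrix (Fin n) (Fin n) ℝ | (∑ j, M i j) = (d : ℝ)}))) := by
    ext M
    simp only [RegAdj, Set.mem_setOf_eq, Set.mem_inter_iff, Set.mem_iInter, Set.mem_union]
    constructor
    · rintro ⟨hs, hd, h01, hrow⟩
      exact ⟨fun i j => hs.apply i j, hd, fun i j => h01 i j, hrow⟩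
    · rintro ⟨hs, hd, h01, hrow⟩
      refine ⟨Matrix.IsSymm.ext fun i j => hs i j, hd, fun i j => h01 i j, hrow⟩
  rw [h1]
  refine MeasurableSet.inter ?_ (MeasurableSet.inter ?_ (MeasurableSet.inter ?_ ?_))
  · exact MeasurableSet.iInter fun i => MeasurableSet.iInter fun j =>
      measurableSet_eq_fun (measurable_entry j i) (measurable_entry i j)
  · exact MeasurableSet.iInter fun i =>
      measurableSet_eq_fun (measurable_entry i i) measurable_const
  · exact MeasurableSet.iInter fun i => MeasurableSet.iInter fun j =>
      (measurableSet_eq_fun (measurable_entry i j) measurable_const).union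
        (measurableSet_eq_fun (measurable_entry i j) measurable_const)
  · exact MeasurableSet.iInter fun i =>
      measurableSet_eq_fun (Finset.measurable_sum _ fun j _ => measurable_entry i j)
        measurable_const

/-- Tail bound for the absolute value of a Weibull variable. -/
lemma abs_tail {Ω' : Type*} [MeasurableSpace Ω'] (P : Measure Ω') [IsProbabilityMeasure P]
    {α C₁ C₂ : ℝ} {μ : Measure ℝ} (hW : IsWeibull α C₁ C₂ μ) (hα : 0 < α)
    (hC₂ : 0 ≤ C₂) {Z : Ω' → ℝ} (hZ : Measurable Z) (hmap : Measure.map Z P = μ) (t : ℝ) :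
    P {ω | t ≤ |Z ω|} ≤
      ENNReal.ofReal ((max C₂ (Real.exp 1)) * Real.exp (-(max t 0) ^ α)) := by
  set C := max C₂ (Real.exp 1) with hC
  rcases le_or_gt 1 t with ht | ht
  · have ht0 : max t 0 = t := max_eq_left (by linarith)
    have hsub : {ω | t ≤ |Z ω|} ⊆ (Z ⁻¹' {x | t ≤ x}) ∪ (Z ⁻¹' {x | x ≤ -t}) := by
      intro ω hω
      simp only [Set.mem_setOf_eq] at hω
      rcases abs_cases (Z ω) with ⟨he, -⟩ | ⟨he, -⟩
      · left; simp only [Set.mem_preimage, Set.mem_setOf_eq]; linarith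
      · right; simp only [Set.mem_preimage, Set.mem_setOf_eq]; linarith
    have hm1 : P (Z ⁻¹' {x | t ≤ x}) = μ {x | t ≤ x} := by
      rw [← hmap, Measure.map_apply hZ (show MeasurableSet {x : ℝ | t ≤ x} from measurableSet_Ici)]
    have hm2 : P (Z ⁻¹' {x | x ≤ -t}) = μ {x | x ≤ -t} := by
      rw [← hmap, Measure.map_apply hZ (show MeasurableSet {x : ℝ | x ≤ -t} from measurableSet_Iic)]
    obtain ⟨-, hub, -, hlb⟩ := hW.2 t ht
    calc P {ω | t ≤ |Z ω|} ≤ P (Z ⁻¹' {x | t ≤ x}) + P (Z ⁻¹' {x | x ≤ -t}) :=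
          le_trans (measure_mono hsub) (measure_union_le _ _)
      _ ≤ ENNReal.ofReal (C₂ * Real.exp (-t ^ α) / 2) +
          ENNReal.ofReal (C₂ * Real.exp (-t ^ α) / 2) := by
          rw [hm1, hm2]; exact add_le_add hub hlb
      _ = ENNReal.ofReal (C₂ * Real.exp (-t ^ α)) := by
          rw [← ENNReal.ofReal_add (div_nonneg (mul_nonneg hC₂ (Real.exp_pos _).le) (by norm_num)) (div_nonneg (mul_nonneg hC₂ (Real.exp_pos _).le) (by norm_num))]
          ring_nf
      _ ≤ ENNReal.ofReal (C * Real.exp (-(max t 0) ^ α)) := by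
          apply ENNReal.ofReal_le_ofReal
          rw [ht0]
          exact mul_le_mul_of_nonneg_right (le_max_left _ _) (Real.exp_pos _).le
  · have h1 : (max t 0) ^ α ≤ 1 := by
      apply Real.rpow_le_one (le_max_right _ _) _ hα.le
      apply max_le ht.le zero_le_one
    calc P {ω | t ≤ |Z ω|} ≤ 1 := prob_le_one
      _ = ENNReal.ofReal 1 := ENNReal.ofReal_one.symm
      _ ≤ ENNReal.ofReal (C * Real.exp (-(max t 0) ^ α)) := by
          apply ENNReal.ofReal_le_ofReal
          have h2 : Real.exp 1 * Real.exp (-(max t 0) ^ α) ≤ C * Real.exp (-(max t 0) ^ α) :=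
            mul_le_mul_of_nonneg_right (le_max_right _ _) (Real.exp_pos _).le
          have h3 : (1:ℝ) ≤ Real.exp 1 * Real.exp (-(max t 0) ^ α) := by
            rw [← Real.exp_add]
            calc (1:ℝ) = Real.exp 0 := Real.exp_zero.symm
              _ ≤ Real.exp (1 + -(max t 0) ^ α) := Real.exp_le_exp.2 (by linarith)
          linarith


/-- Tail bound for the sum of `d` weight entries in row `u`. -/
lemma slice_bound {n d : ℕ} {Ω : Type*} [MeasurableSpace Ω] (P : Measure Ω)
    [IsProbabilityMeasure P] {W : Ω → Matrix (Fin n) (Fin n) ℝ} {μ : Measure ℝ} {α C₁ C₂ : ℝ}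
    (hα : 0 < α) (hα1 : α ≤ 1) (hC₂ : 0 ≤ C₂)
    (hWei : IsWeibull α C₁ C₂ μ) (hW : Measurable W)
    (hWsym : ∀ ω, (W ω).IsSymm)
    (hmap : ∀ i j : Fin n, i < j → Measure.map (fun ω => W ω i j) P = μ)
    (hind : iIndepFun
      (fun (p : {p : Fin n × Fin n // p.1 < p.2}) (ω : Ω) => W ω p.1.1 p.1.2) P)
    (u : Fin n) (N : Finset (Fin n)) (hNcard : N.card = d) (huN : u ∉ N) (T : ℝ) :
    P {ω | T ≤ ∑ j ∈ N, |W ω u j|} ≤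
      ENNReal.ofReal ((max C₂ (Real.exp 1)) ^ d * (max T 0 + 2) ^ d *
        Real.exp (-(max (T - (d:ℝ)) 0) ^ α)) := by
  classical
  set Ip := {p : Fin n × Fin n // p.1 < p.2} with hIp
  set Y : Ip → Ω → ℝ := fun p ω => |W ω p.1.1 p.1.2| with hY
  set C : ℝ := max C₂ (Real.exp 1) with hCdef
  -- the pairing map
  have hne : ∀ j : {x // x ∈ N}, (j : Fin n) ≠ u := fun j e => huN (e ▸ j.2)
  set q : {x // x ∈ N} → Ip := fun j =>
    if h : u < (j : Fin n) then ⟨(u, (j : Fin n)), h⟩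
    else ⟨((j : Fin n), u), lt_of_le_of_ne (not_lt.1 h) (hne j)⟩ with hq
  have hinj : Set.InjOn q N.attach := by
    intro x _ y _ hxy
    have hxy' := congrArg Subtype.val hxy
    simp only [hq] at hxy'
    apply Subtype.ext
    by_cases hx : u < (x : Fin n) <;> by_cases hy' : u < (y : Fin n)
    · rw [dif_pos hx, dif_pos hy'] at hxy'
      simp only [Prod.mk.injEq] at hxy'
      exact hxy'.2
    · rw [dif_pos hx, dif_neg hy'] at hxy'
      simp only [Prod.mk.injEq] at hxy'
      exact absurd hxy'.1.symm (hne y)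
    · rw [dif_neg hx, dif_pos hy'] at hxy'
      simp only [Prod.mk.injEq] at hxy'
      exact absurd hxy'.1 (hne x)
    · rw [dif_neg hx, dif_neg hy'] at hxy'
      simp only [Prod.mk.injEq] at hxy'
      exact hxy'.1
  set S : Finset Ip := N.attach.image q with hS
  have hScard : S.card = d := by
    rw [hS, Finset.card_image_of_injOn hinj, Finset.card_attach, hNcard]
  have hsum : ∀ ω, ∑ p ∈ S, Y p ω = ∑ j ∈ N, |W ω u j| := by
    intro ω
    rw [hS, Finset.sum_image hinj]
    rw [← Finset.sum_attach N (fun j => |W ω u j|)]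
    apply Finset.sum_congr rfl
    intro j _
    by_cases h : u < (j : Fin n)
    · simp only [hY, hq, dif_pos h]
    · simp only [hY, hq, dif_neg h]
      rw [(hWsym ω).apply u (j : Fin n)]
  have hYmeas : ∀ p : Ip, Measurable (Y p) :=
    fun p => ((measurable_entry p.1.1 p.1.2).comp hW).abs
  have hYnn : ∀ (p : Ip) ω, 0 ≤ Y p ω := fun p ω => abs_nonneg _
  have hYind : iIndepFun Y P := by
    have := hind.comp (fun _ => fun x : ℝ => |x|) (fun _ => measurable_abs)
    exact this
  have hYtail : ∀ (p : Ip) (t : ℝ),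
      P {ω | t ≤ Y p ω} ≤ ENNReal.ofReal (C * Real.exp (-(max t 0) ^ α)) := by
    intro p t
    exact abs_tail P hWei hα hC₂ ((measurable_entry p.1.1 p.1.2).comp hW)
      (hmap p.1.1 p.1.2 p.2) t
  have hset : {ω | T ≤ ∑ j ∈ N, |W ω u j|} = {ω | T ≤ ∑ p ∈ S, Y p ω} := by
    ext ω; rw [Set.mem_setOf_eq, Set.mem_setOf_eq, hsum ω]
  rw [hset]
  have := sum_tail P α C hα hα1 (le_max_right _ _) Y hYmeas hYnn hYind hYtail S T
  rwa [hScard] at this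

/-- Row-sum tail bound using independence of `A` and `W`. -/
lemma row_bound {n d : ℕ} {Ω : Type*} [MeasurableSpace Ω] (P : Measure Ω)
    [IsProbabilityMeasure P] {A W : Ω → Matrix (Fin n) (Fin n) ℝ} {μ : Measure ℝ} {α C₁ C₂ : ℝ}
    (hα : 0 < α) (hα1 : α ≤ 1) (hC₂ : 0 ≤ C₂)
    (hWei : IsWeibull α C₁ C₂ μ) (hA : Measurable A) (hW : Measurable W)
    (hAreg : ∀ ω, A ω ∈ RegAdj n d)
    (hWsym : ∀ ω, (W ω).IsSymm)
    (hmap : ∀ i j : Fin n, i < j → Measure.map (fun ω => W ω i j) P = μ)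
    (hind : iIndepFun
      (fun (p : {p : Fin n × Fin n // p.1 < p.2}) (ω : Ω) => W ω p.1.1 p.1.2) P)
    (hAW : IndepFun A W P) (u : Fin n) (T : ℝ) :
    P {ω | T ≤ ∑ j, A ω u j * |W ω u j|} ≤
      ENNReal.ofReal ((max C₂ (Real.exp 1)) ^ d * (max T 0 + 2) ^ d *
        Real.exp (-(max (T - (d:ℝ)) 0) ^ α)) := by
  classical
  set B := ENNReal.ofReal ((max C₂ (Real.exp 1)) ^ d * (max T 0 + 2) ^ d *
      Real.exp (-(max (T - (d:ℝ)) 0) ^ α)) with hB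
  set g : Matrix (Fin n) (Fin n) ℝ × Matrix (Fin n) (Fin n) ℝ → ℝ :=
    fun p => ∑ j, p.1 u j * |p.2 u j| with hg
  have hgm : Measurable g := by
    apply Finset.measurable_sum
    intro j _
    exact ((measurable_entry u j).comp measurable_fst).mul
      (((measurable_entry u j).comp measurable_snd).abs)
  have hEset : MeasurableSet {p : Matrix (Fin n) (Fin n) ℝ × Matrix (Fin n) (Fin n) ℝ | T ≤ g p} :=
    measurableSet_le measurable_const hgm
  haveI hPW : IsProbabilityMeasure (P.map W) := Measure.isProbabilityMeasure_map hW.aemeasurable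
  haveI hPA : IsProbabilityMeasure (P.map A) := Measure.isProbabilityMeasure_map hA.aemeasurable
  have hprod : P.map (fun ω => (A ω, W ω)) = (P.map A).prod (P.map W) :=
    (indepFun_iff_map_prod_eq_prod_map_map hA.aemeasurable hW.aemeasurable).1 hAW
  have h1 : P {ω | T ≤ ∑ j, A ω u j * |W ω u j|} =
      ((P.map A).prod (P.map W)) {p | T ≤ g p} := by
    rw [← hprod, Measure.map_apply (hA.prodMk hW) hEset]
    rfl
  rw [h1, Measure.prod_apply hEset]
  have hae : ∀ᵐ a ∂(P.map A), a ∈ RegAdj n d := by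
    rw [ae_iff]
    have hc : {a : Matrix (Fin n) (Fin n) ℝ | ¬ a ∈ RegAdj n d} = (RegAdj n d)ᶜ := rfl
    rw [hc, Measure.map_apply hA (measurableSet_RegAdj n d).compl]
    have : A ⁻¹' (RegAdj n d)ᶜ = ∅ := by
      ext ω; simp [hAreg ω]
    rw [this, measure_empty]
  have hbound : ∀ᵐ a ∂(P.map A), (P.map W) (Prod.mk a ⁻¹' {p | T ≤ g p}) ≤ B := by
    filter_upwards [hae] with a ha
    obtain ⟨hsym_a, hdiag_a, h01_a, hrow_a⟩ := ha
    set N : Finset (Fin n) := Finset.univ.filter (fun j => a u j = 1) with hN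
    have hNsum : (∑ j, a u j) = (N.card : ℝ) := by
      rw [← Finset.sum_filter_add_sum_filter_not Finset.univ (fun j => a u j = 1)]
      have e1 : ∑ j ∈ Finset.univ.filter (fun j => a u j = 1), a u j = (N.card : ℝ) := by
        rw [Finset.sum_congr rfl (fun j hj => (Finset.mem_filter.1 hj).2), Finset.sum_const,
          nsmul_eq_mul, mul_one, hN]
      have e2 : ∑ j ∈ Finset.univ.filter (fun j => ¬ a u j = 1), a u j = 0 :=
        Finset.sum_eq_zero fun j hj => (h01_a u j).resolve_right (Finset.mem_filter.1 hj).2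
      rw [e1, e2, add_zero]
    have hNcard : N.card = d := by
      have := hrow_a u
      rw [hNsum] at this
      exact_mod_cast this
    have huN : u ∉ N := by
      intro hu
      have := (Finset.mem_filter.1 hu).2
      rw [hdiag_a u] at this
      norm_num at this
    have hsl : Prod.mk a ⁻¹' {p | T ≤ g p} = {w | T ≤ ∑ j ∈ N, |w u j|} := by
      ext w
      simp only [Set.mem_preimage, Set.mem_setOf_eq, hg]
      constructor <;> intro hw <;> [skip; skip] <;>
      · have e : ∑ j, a u j * |w u j| = ∑ j ∈ N, |w u j| := by
          rw [← Finset.sum_filter_add_sum_filter_not Finset.univ (fun j => a u j = 1)]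
          have e1 : ∑ j ∈ Finset.univ.filter (fun j => a u j = 1), a u j * |w u j|
              = ∑ j ∈ N, |w u j| := by
            apply Finset.sum_congr rfl
            intro j hj
            rw [(Finset.mem_filter.1 hj).2, one_mul]
          have e2 : ∑ j ∈ Finset.univ.filter (fun j => ¬ a u j = 1), a u j * |w u j| = 0 :=
            Finset.sum_eq_zero fun j hj => by
              rw [(h01_a u j).resolve_right (Finset.mem_filter.1 hj).2, zero_mul]
          rw [e1, e2, add_zero]
        linarith [e.le, e.ge]
    rw [hsl]
    have hms : MeasurableSet {w : Matrix (Fin n) (Fin n) ℝ | T ≤ ∑ j ∈ N, |w u j|} :=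
      measurableSet_le measurable_const
        (Finset.measurable_sum N fun j _ => (measurable_entry u j).abs)
    rw [Measure.map_apply hW hms]
    have hpre : W ⁻¹' {w | T ≤ ∑ j ∈ N, |w u j|} = {ω | T ≤ ∑ j ∈ N, |W ω u j|} := rfl
    rw [hpre, hB]
    exact slice_bound P hα hα1 hC₂ hWei hW hWsym hmap hind u N hNcard huN T
  calc ∫⁻ a, (P.map W) (Prod.mk a ⁻¹' {p | T ≤ g p}) ∂(P.map A)
      ≤ ∫⁻ _a, B ∂(P.map A) := lintegral_mono_ae hbound
    _ = B := by rw [lintegral_const, measure_univ, mul_one]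

lemma bound_tendsto (d : ℕ) (α τ' C : ℝ) (hα : 0 < α) (hα1 : α ≤ 1)
    (hτ0 : 1 - α < τ') (hτ1 : τ' ≤ 1) (hC : 0 < C) :
    Tendsto (fun n : ℕ => (n : ℝ) * (C ^ d *
      (max (Real.log n ^ (1/α) + Real.log n ^ (τ'/α)) 0 + 2) ^ d *
      Real.exp (-(max (Real.log n ^ (1/α) + Real.log n ^ (τ'/α) - (d:ℝ)) 0) ^ α)))
      atTop (nhds 0) := by
  set c : ℝ := 2 ^ α - 1 with hcdef
  have hc : 0 < c := by
    have : (1:ℝ) < 2 ^ α := by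
      rw [show (1:ℝ) = 2 ^ (0:ℝ) by rw [Real.rpow_zero]]
      exact Real.rpow_lt_rpow_of_exponent_lt one_lt_two hα
    simp only [hcdef]; linarith
  set γ : ℝ := (α + τ' - 1) / α with hγdef
  have hγ : 0 < γ := div_pos (by linarith) hα
  set K : ℝ := C ^ d * 4 ^ d * Real.exp ((d:ℝ) ^ α) with hK
  -- limit of the majorant in the continuous variable
  have glim : Tendsto (fun x : ℝ => x ^ ((d:ℝ)/α) * Real.exp (-(c * x ^ γ))) atTop (nhds 0) := by
    have h0 := tendsto_rpow_mul_exp_neg_mul_atTop_nhds_zero ((d:ℝ)/α/γ) c hc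
    have h1 := h0.comp (tendsto_rpow_atTop hγ)
    apply h1.congr'
    filter_upwards [eventually_ge_atTop (1:ℝ)] with x hx
    have hx0 : (0:ℝ) ≤ x := by linarith
    show (x ^ γ) ^ ((d:ℝ)/α/γ) * Real.exp (-c * x ^ γ) = _
    rw [← Real.rpow_mul hx0, neg_mul]
    congr 2
    field_simp
  -- majorant as a function of n
  have Llim : Tendsto (fun n : ℕ => Real.log n) atTop atTop :=
    Real.tendsto_log_atTop.comp tendsto_natCast_atTop_atTop
  have gn : Tendsto (fun n : ℕ => K * (Real.log n ^ ((d:ℝ)/α) *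
      Real.exp (-(c * Real.log n ^ γ)))) atTop (nhds 0) := by
    have := (glim.comp Llim).const_mul K
    simpa using this
  apply squeeze_zero' (g := fun n : ℕ => K * (Real.log n ^ ((d:ℝ)/α) *
      Real.exp (-(c * Real.log n ^ γ))))
  · filter_upwards with n
    have h1 : (0:ℝ) ≤ max (Real.log n ^ (1/α) + Real.log n ^ (τ'/α)) 0 := le_max_right _ _
    positivity
  · have hcond : ∀ᶠ n : ℕ in atTop, 1 ≤ Real.log n ∧ (d:ℝ) ≤ Real.log n ^ (1/α) ∧ 1 ≤ n := by
      have h2 : Tendsto (fun n : ℕ => Real.log n ^ (1/α)) atTop atTop :=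
        (tendsto_rpow_atTop (by positivity)).comp Llim
      filter_upwards [Llim.eventually_ge_atTop 1, h2.eventually_ge_atTop (d:ℝ),
        eventually_ge_atTop 1] with n ha hb hc'
      exact ⟨ha, hb, hc'⟩
    filter_upwards [hcond] with n hn
    obtain ⟨hL1, hLd, hn1⟩ := hn
    set L : ℝ := Real.log n with hLdef
    have hL0 : (0:ℝ) < L := by linarith
    set a : ℝ := L ^ (1/α) with hadef
    set b : ℝ := L ^ (τ'/α) with hbdef
    have ha0 : 0 < a := Real.rpow_pos_of_pos hL0 _
    have hb0 : 0 < b := Real.rpow_pos_of_pos hL0 _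
    have ha1 : 1 ≤ a := by
      have := Real.rpow_le_rpow zero_le_one hL1 (by positivity : (0:ℝ) ≤ 1/α)
      rwa [Real.one_rpow] at this
    set s : ℝ := L ^ ((τ' - 1)/α) with hsdef
    have hs0 : 0 < s := Real.rpow_pos_of_pos hL0 _
    have hs1 : s ≤ 1 :=
      Real.rpow_le_one_of_one_le_of_nonpos hL1 (div_nonpos_of_nonpos_of_nonneg (by linarith) hα.le)
    have hab : a * s = b := by
      rw [hadef, hsdef, hbdef, ← Real.rpow_add hL0]
      congr 1
      field_simp
      ring
    set T : ℝ := a + b with hTdef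
    have hT0 : 0 < T := by linarith
    have hTd : (d:ℝ) ≤ T := by linarith
    have hmaxT : max T 0 = T := max_eq_left hT0.le
    have hmaxTd : max (T - (d:ℝ)) 0 = T - d := max_eq_left (by linarith)
    -- key lower bound on T^α
    have haα : a ^ α = L := by
      rw [hadef, ← Real.rpow_mul hL0.le, one_div, inv_mul_cancel₀ hα.ne', Real.rpow_one]
    have hLs : L * s = L ^ γ := by
      nth_rewrite 1 [show L = L ^ (1:ℝ) by rw [Real.rpow_one]]
      rw [hsdef, ← Real.rpow_add hL0]
      congr 1
      rw [hγdef]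
      field_simp
      ring
    have hTα : L + c * L ^ γ ≤ T ^ α := by
      have hfact : T = a * (1 + s) := by
        rw [hTdef, ← hab]; ring
      have h3 : (1 + c * s) ≤ (1 + s) ^ α := by
        have := one_add_rpow_ge hα hα1 hs0.le hs1
        simpa [hcdef] using this
      calc L + c * L ^ γ = L * (1 + c * s) := by rw [← hLs]; ring
        _ ≤ L * (1 + s) ^ α := by
            apply mul_le_mul_of_nonneg_left h3 hL0.le
        _ = a ^ α * (1 + s) ^ α := by rw [haα]
        _ = (a * (1 + s)) ^ α := (Real.mul_rpow ha0.le (by linarith)).symm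
        _ = T ^ α := by rw [← hfact]
    have hTsub : T ^ α ≤ (T - d) ^ α + (d:ℝ) ^ α := by
      have := rpow_subadd hα.le hα1 (by linarith : (0:ℝ) ≤ T - d) (Nat.cast_nonneg d)
      rwa [show T - (d:ℝ) + (d:ℝ) = T by ring] at this
    -- exponential factor bound
    have e1 : Real.exp (-(max (T - (d:ℝ)) 0) ^ α) ≤
        Real.exp ((d:ℝ) ^ α) * (Real.exp (-L) * Real.exp (-(c * L ^ γ))) := by
      rw [← Real.exp_add, ← Real.exp_add, hmaxTd]
      apply Real.exp_le_exp.2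
      linarith
    -- polynomial factor bound
    have e2 : (max T 0 + 2) ^ d ≤ 4 ^ d * L ^ ((d:ℝ)/α) := by
      have hba : b ≤ a := by
        rw [← hab]
        nth_rewrite 2 [show a = a * 1 by ring]
        exact mul_le_mul_of_nonneg_left hs1 ha0.le
      have h4 : max T 0 + 2 ≤ 4 * a := by
        rw [hmaxT]; linarith
      have had : a ^ d = L ^ ((d:ℝ)/α) := by
        rw [hadef, ← Real.rpow_natCast (L ^ (1/α)) d, ← Real.rpow_mul hL0.le]
        congr 1
        field_simp
      calc (max T 0 + 2) ^ d ≤ (4 * a) ^ d := by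
            apply pow_le_pow_left₀ (by positivity) h4
        _ = 4 ^ d * a ^ d := mul_pow _ _ _
        _ = 4 ^ d * L ^ ((d:ℝ)/α) := by rw [had]
    have hexpL : (n:ℝ) * Real.exp (-L) = 1 := by
      rw [hLdef, Real.exp_neg, Real.exp_log (by exact_mod_cast hn1 : (0:ℝ) < n)]
      field_simp
    calc (n:ℝ) * (C ^ d * (max T 0 + 2) ^ d * Real.exp (-(max (T - (d:ℝ)) 0) ^ α))
        ≤ (n:ℝ) * (C ^ d * (4 ^ d * L ^ ((d:ℝ)/α)) *
            (Real.exp ((d:ℝ) ^ α) * (Real.exp (-L) * Real.exp (-(c * L ^ γ))))) := by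
          gcongr
      _ = K * (L ^ ((d:ℝ)/α) * Real.exp (-(c * L ^ γ))) * ((n:ℝ) * Real.exp (-L)) := by
          rw [hK]; ring
      _ = K * (L ^ ((d:ℝ)/α) * Real.exp (-(c * L ^ γ))) := by rw [hexpL, mul_one]
  · exact gn

/-- **Upper tail bound for the largest eigenvalue, case `0 < α ≤ 1`.** -/
theorem largest_eigenvalue_upper_tail_heavy
    (d : ℕ) (hd : 3 ≤ d) (α : ℝ) (hα : 0 < α) (hα1 : α ≤ 1)
    (τ : ℝ) (hτ : 2 / (α + 2) < τ)
    (C₁ C₂ : ℝ) (hC₁ : 0 < C₁) (hC₂ : 0 < C₂)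
    (Ω : ℕ → Type*) [∀ n, MeasurableSpace (Ω n)]
    (P : ∀ n, Measure (Ω n))
    (A W : ∀ n, Ω n → Matrix (Fin n) (Fin n) ℝ)
    (μ : ℕ → Measure ℝ)
    (hmodel : ∀ n, d < n → Even (n * d) →
      WRRGModel d α C₁ C₂ (P n) (A n) (W n) (μ n)) :
    Tendsto
      (fun n => P n {ω |
        Real.log n ^ (1 / α) + Real.log n ^ (τ / α) ≤
          lam1 (Matrix.hadamard (A n ω) (W n ω))})
      (atTop ⊓ 𝓟 {n : ℕ | d < n ∧ Even (n * d)}) (nhds 0) := by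
  classical
  set τ' : ℝ := min τ 1 with hτ'def
  have hτ'1 : τ' ≤ 1 := min_le_right _ _
  have hτα : 1 - α < τ' := by
    have h1 : 1 - α < 2 / (α + 2) := by
      rw [lt_div_iff₀ (by linarith)]
      nlinarith
    exact lt_min (lt_trans h1 hτ) (by linarith)
  set C : ℝ := max C₂ (Real.exp 1) with hCdef
  have hC : 0 < C := lt_of_lt_of_le (Real.exp_pos 1) (le_max_right _ _)
  set T' : ℕ → ℝ := fun n => Real.log n ^ (1/α) + Real.log n ^ (τ'/α) with hT'def
  set b : ℕ → ℝ := fun n => (n:ℝ) * (C ^ d * (max (T' n) 0 + 2) ^ d *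
      Real.exp (-(max (T' n - (d:ℝ)) 0) ^ α)) with hbdef
  have hblim : Tendsto (fun n => ENNReal.ofReal (b n))
      (atTop ⊓ 𝓟 {n : ℕ | d < n ∧ Even (n * d)}) (nhds 0) := by
    have h0 := bound_tendsto d α τ' C hα hα1 hτα hτ'1 hC
    have h1 : Tendsto (fun n => ENNReal.ofReal (b n)) atTop (nhds 0) := by
      have h2 := ENNReal.tendsto_ofReal (a := 0) h0
      rwa [ENNReal.ofReal_zero] at h2
    exact h1.mono_left inf_le_left
  have hle : ∀ᶠ n in (atTop ⊓ 𝓟 {n : ℕ | d < n ∧ Even (n * d)}),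
      P n {ω | Real.log n ^ (1 / α) + Real.log n ^ (τ / α) ≤
        lam1 (Matrix.hadamard (A n ω) (W n ω))} ≤ ENNReal.ofReal (b n) := by
    rw [eventually_inf_principal]
    filter_upwards [eventually_ge_atTop 3] with n hn3 hnS
    obtain ⟨hdn, heven⟩ := hnS
    obtain ⟨hP, hA, hW, hAreg, hunif, hWsym, hWdiag, hWei, hmap, hind, hAW⟩ :=
      hmodel n hdn heven
    haveI : IsProbabilityMeasure (P n) := hP
    have hn0 : 0 < n := by omega
    have hL1 : 1 ≤ Real.log n := by
      have h3 : Real.exp 1 ≤ 3 := by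
        have := Real.exp_one_lt_d9
        linarith
      have hlog3 : (1:ℝ) ≤ Real.log 3 := by
        rw [Real.le_log_iff_exp_le (by norm_num : (0:ℝ) < 3)]
        exact h3
      have : Real.log 3 ≤ Real.log n :=
        Real.log_le_log (by norm_num) (by exact_mod_cast hn3)
      linarith
    have hL0 : 0 < Real.log n := by linarith
    have hT'0 : 0 < T' n := by
      have := Real.rpow_pos_of_pos hL0 (1/α)
      have := Real.rpow_pos_of_pos hL0 (τ'/α)
      rw [hT'def]
      dsimp only
      linarith
    have hT'T : T' n ≤ Real.log n ^ (1 / α) + Real.log n ^ (τ / α) := by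
      rw [hT'def]
      dsimp only
      have hττ : τ' / α ≤ τ / α := by
        gcongr
        exact min_le_left _ _
      have := Real.rpow_le_rpow_of_exponent_le hL1 hττ
      linarith
    -- inclusion into the union of row events
    have hincl : {ω | Real.log n ^ (1 / α) + Real.log n ^ (τ / α) ≤
          lam1 (Matrix.hadamard (A n ω) (W n ω))} ⊆
        ⋃ u : Fin n, {ω | T' n ≤ ∑ j, A n ω u j * |W n ω u j|} := by
      intro ω hω
      simp only [Set.mem_setOf_eq] at hω
      have hω' : T' n ≤ lam1 (Matrix.hadamard (A n ω) (W n ω)) := le_trans hT'T hω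
      obtain ⟨u, hu⟩ := exists_row_of_le_lam1 hn0 _ hT'0 hω'
      refine Set.mem_iUnion.2 ⟨u, ?_⟩
      have he : ∀ j, |Matrix.hadamard (A n ω) (W n ω) u j| = A n ω u j * |W n ω u j| := by
        intro j
        have hnn : 0 ≤ A n ω u j := by
          rcases (hAreg ω).2.2.1 u j with h | h <;> rw [h] <;> norm_num
        rw [Matrix.hadamard_apply, abs_mul, abs_of_nonneg hnn]
      simp only [Set.mem_setOf_eq]
      calc T' n ≤ ∑ j, |Matrix.hadamard (A n ω) (W n ω) u j| := hu
        _ = ∑ j, A n ω u j * |W n ω u j| := Finset.sum_congr rfl fun j _ => he j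
    -- union bound and the row bound
    have hC₂' : (0:ℝ) ≤ C₂ := hC₂.le
    calc P n {ω | Real.log n ^ (1 / α) + Real.log n ^ (τ / α) ≤
          lam1 (Matrix.hadamard (A n ω) (W n ω))}
        ≤ P n (⋃ u : Fin n, {ω | T' n ≤ ∑ j, A n ω u j * |W n ω u j|}) :=
          measure_mono hincl
      _ ≤ ∑ u : Fin n, P n {ω | T' n ≤ ∑ j, A n ω u j * |W n ω u j|} :=
          measure_iUnion_fintype_le _ _
      _ ≤ ∑ _u : Fin n, ENNReal.ofReal (C ^ d * (max (T' n) 0 + 2) ^ d *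
            Real.exp (-(max (T' n - (d:ℝ)) 0) ^ α)) := by
          apply Finset.sum_le_sum
          intro u _
          exact row_bound (P n) hα hα1 hC₂' hWei hA hW hAreg hWsym hmap hind hAW u (T' n)
      _ = (n : ℝ≥0∞) * ENNReal.ofReal (C ^ d * (max (T' n) 0 + 2) ^ d *
            Real.exp (-(max (T' n - (d:ℝ)) 0) ^ α)) := by
          rw [Finset.sum_const, Finset.card_univ, Fintype.card_fin, nsmul_eq_mul]
      _ = ENNReal.ofReal (b n) := by
          rw [hbdef]
          dsimp only
          rw [ENNReal.ofReal_mul (Nat.cast_nonneg n), ENNReal.ofReal_natCast]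
  refine tendsto_of_tendsto_of_tendsto_of_le_of_le' tendsto_const_nhds hblim ?_ hle
  filter_upwards with n
  exact bot_le
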